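/- arXiv:math/9807095 — 2 statements merged into one kernel-verified Lean document; each statement's English description precedes it below -/
import Mathlib

section
/- Let Q ∈ GL(n, ℂ) satisfy Q·conj(Q) = c·I_n with c ∈ ℂ, and suppose Tr(Q Q*) = Tr((Q Q*)^{-1}). Then c = ±1, and if n is odd then c = 1. -/
open Matrix

theorem stmt_3 (n : ℕ) (hn : 0 < n) (Q : Matrix (Fin n) (Fin n) ℂ)
    (hQ : IsUnit Q) (c : ℂ)
    (h : Q * Q.map (starRingEnd ℂ) = c • 1)
    (htr : (Q * Qᴴ).trace = ((Q * Qᴴ)⁻¹).trace) :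
    (c = 1 ∨ c = -1) ∧ (Odd n → c = 1) := by
  haveI : Nonempty (Fin n) := Fin.pos_iff_nonempty.mp hn
  have hdet : IsUnit Q.det := (Matrix.isUnit_iff_isUnit_det Q).mp hQ
  -- det identity : c ^ n = |det Q|^2
  have hdetid : c ^ n = (Complex.normSq Q.det : ℂ) := by
    have := congrArg Matrix.det h
    rw [Matrix.det_mul, Matrix.det_smul, Matrix.det_one, mul_one,
      show Q.map ⇑(starRingEnd ℂ) = (starRingEnd ℂ).mapMatrix Q from rfl,
      ← RingHom.map_det] at this
    simpa [Complex.normSq_eq_conj_mul_self, mul_comm] using this.symm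
  have hdet0 : Q.det ≠ 0 := hdet.ne_zero
  have hc0 : c ≠ 0 := by
    intro hc
    rw [hc, zero_pow hn.ne'] at hdetid
    exact hdet0 (by
      have : Complex.normSq Q.det = 0 := by exact_mod_cast hdetid.symm
      exact Complex.normSq_eq_zero.mp this)
  -- conj(Q) = c • Q⁻¹
  have hconj : Q.map (starRingEnd ℂ) = c • Q⁻¹ := by
    have h2 := congrArg (Q⁻¹ * ·) h
    simp only [← mul_assoc, Matrix.nonsing_inv_mul Q hdet, one_mul,
      Matrix.mul_smul, mul_one] at h2
    exact h2
  have hQH : Qᴴ = c • (Q⁻¹)ᵀ := by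
    have : Qᴴ = (Q.map (starRingEnd ℂ))ᵀ := by
      ext i j; simp [Matrix.conjTranspose_apply]
    rw [this, hconj, Matrix.transpose_smul]
  -- P = c • (Q * (Q⁻¹)ᵀ)
  have hP : Q * Qᴴ = c • (Q * (Q⁻¹)ᵀ) := by
    rw [hQH, Matrix.mul_smul]
  have hdetA : IsUnit (Q * (Q⁻¹)ᵀ).det := by
    rw [Matrix.det_mul, Matrix.det_transpose, Matrix.det_nonsing_inv]
    exact hdet.mul (isUnit_ringInverse.mpr hdet)
  -- inverse of P
  haveI : Invertible c := invertibleOfNonzero hc0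
  have hPinv : (Q * Qᴴ)⁻¹ = c⁻¹ • (Qᵀ * Q⁻¹) := by
    apply Matrix.inv_eq_left_inv
    rw [hP, Matrix.smul_mul, Matrix.mul_smul, smul_smul, inv_mul_cancel₀ hc0,
      one_smul, mul_assoc, ← mul_assoc Q⁻¹, Matrix.nonsing_inv_mul Q hdet,
      one_mul, ← Matrix.transpose_mul, Matrix.nonsing_inv_mul Q hdet,
      Matrix.transpose_one]
  -- traces
  set t : ℂ := (Q * (Q⁻¹)ᵀ).trace with ht
  have htrP : (Q * Qᴴ).trace = c * t := by rw [hP, Matrix.trace_smul, smul_eq_mul]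
  have htrPinv : ((Q * Qᴴ)⁻¹).trace = c⁻¹ * t := by
    rw [hPinv, Matrix.trace_smul, smul_eq_mul]
    congr 1
    rw [Matrix.trace_mul_comm, ← Matrix.trace_transpose (Q⁻¹ * Qᵀ),
      Matrix.transpose_mul, Matrix.transpose_transpose]
  -- trace P ≠ 0
  have hQne : Q ≠ 0 := by
    haveI : Nontrivial (Matrix (Fin n) (Fin n) ℂ) := inferInstance
    exact hQ.ne_zero
  have htrP0 : (Q * Qᴴ).trace ≠ 0 := by
    have hform : (Q * Qᴴ).trace = ((∑ i, ∑ j, Complex.normSq (Q i j) : ℝ) : ℂ) := by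
      simp [Matrix.trace, Matrix.diag, Matrix.mul_apply, Matrix.conjTranspose_apply,
        Complex.normSq_eq_conj_mul_self, mul_comm]
    rw [hform]
    intro hz
    have hsum : (∑ i, ∑ j, Complex.normSq (Q i j) : ℝ) = 0 := by exact_mod_cast hz
    apply hQne
    ext i j
    have h1 : ∀ i ∈ (Finset.univ : Finset (Fin n)),
        0 ≤ ∑ j, Complex.normSq (Q i j) :=
      fun i _ => Finset.sum_nonneg fun j _ => Complex.normSq_nonneg _
    have h2 := (Finset.sum_eq_zero_iff_of_nonneg h1).mp hsum i (Finset.mem_univ i)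
    have h3 := (Finset.sum_eq_zero_iff_of_nonneg
      (fun j _ => Complex.normSq_nonneg (Q i j))).mp h2 j (Finset.mem_univ j)
    simpa using Complex.normSq_eq_zero.mp h3
  -- conclude c^2 = 1
  have ht0 : t ≠ 0 := by
    intro hzt; apply htrP0; rw [htrP, hzt, mul_zero]
  have hceq : c = c⁻¹ := by
    have := htr
    rw [htrP, htrPinv] at this
    exact mul_right_cancel₀ ht0 this
  have hc2 : c * c = 1 := by
    nth_rewrite 2 [hceq]
    exact mul_inv_cancel₀ hc0
  have hcpm : c = 1 ∨ c = -1 := mul_self_eq_one_iff.mp hc2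
  refine ⟨hcpm, fun hodd => ?_⟩
  rcases hcpm with h1 | hm1
  · exact h1
  · exfalso
    rw [hm1, hodd.neg_one_pow] at hdetid
    have : (0 : ℝ) ≤ Complex.normSq Q.det := Complex.normSq_nonneg _
    have hre := congrArg Complex.re hdetid
    simp at hre
    linarith
end

section
/- Let Q ∈ GL(n, ℂ) satisfy Q·conj(Q) = ε·I_n with ε = ±1. Then Tr(Q Q*) = Tr((Q Q*)^{-1}). -/
open Matrix

theorem stmt_5 (n : ℕ) (Q : Matrix (Fin n) (Fin n) ℂ) (hQ : IsUnit Q)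
    (ε : ℂ) (hε : ε = 1 ∨ ε = -1)
    (h : Q * Q.map (starRingEnd ℂ) = ε • 1) :
    (Q * Qᴴ).trace = ((Q * Qᴴ)⁻¹).trace := by
  have hε2 : ε * ε = 1 := by rcases hε with h1 | h1 <;> simp [h1]
  have hdet : IsUnit Q.det := (Matrix.isUnit_iff_isUnit_det Q).mp hQ
  have hdetT : IsUnit Qᵀ.det := by rwa [Matrix.det_transpose]
  -- Q.map conj = ε • Q⁻¹
  have hmap : Q.map (starRingEnd ℂ) = ε • Q⁻¹ := by
    have h1 : Q⁻¹ * (Q * Q.map (starRingEnd ℂ)) = Q⁻¹ * (ε • 1) := by rw [h]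
    rw [← mul_assoc, Matrix.nonsing_inv_mul Q hdet, one_mul] at h1
    rw [h1]
    rw [Matrix.mul_smul, mul_one]
  have hH : Qᴴ = ε • (Qᵀ)⁻¹ := by
    have : Qᴴ = (Q.map (starRingEnd ℂ))ᵀ := by
      ext i j; simp [Matrix.conjTranspose_apply, Matrix.map_apply]
    rw [this, hmap, Matrix.transpose_smul, Matrix.transpose_nonsing_inv]
  have hinv : (Q * Qᴴ)⁻¹ = ε • (Qᵀ * Q⁻¹) := by
    apply Matrix.inv_eq_right_inv
    rw [hH]
    simp only [Matrix.mul_smul, Matrix.smul_mul, smul_smul, hε2, one_smul]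
    rw [mul_assoc, ← mul_assoc Qᵀ⁻¹, Matrix.nonsing_inv_mul Qᵀ hdetT,
      one_mul, Matrix.mul_nonsing_inv Q hdet]
  rw [hinv, hH, Matrix.mul_smul, Matrix.trace_smul, Matrix.trace_smul]
  congr 1
  conv_lhs => rw [← Matrix.trace_transpose, Matrix.transpose_mul,
    ← Matrix.transpose_nonsing_inv, Matrix.transpose_transpose]
  exact Matrix.trace_mul_comm Q⁻¹ Qᵀ
end
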